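/- Let (B̃, Λ) be a compatible pair and let 1 ≤ k ≤ n. Then μ_k(B̃)ᵀ · μ_k(Λ) = B̃ᵀ · Λ. In particular the mutated pair (μ_k(B̃), μ_k(Λ)) is again compatible, with the same diagonal matrix D. -/

import Mathlib

open Matrix

/-- The positive part `[a]_+ = max (a, 0)` of an integer. -/
def intPosPart (a : ℤ) : ℤ := max a 0

/-- `(B̃, Λ)` is a compatible pair with diagonal `D = diag (d 0, …, d (n-1))`:
`Λ` is skew-symmetric and `B̃ᵀ Λ = (D 0)`. -/
def IsCompatiblePair {m n : ℕ} (hnm : n ≤ m)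
    (B : Matrix (Fin m) (Fin n) ℤ) (L : Matrix (Fin m) (Fin m) ℤ)
    (d : Fin n → ℤ) : Prop :=
  Lᵀ = -L ∧ (∀ i, 0 < d i) ∧
    ∀ (i : Fin n) (j : Fin m),
      (Bᵀ * L) i j = if (j : ℕ) = (i : ℕ) then d i else 0

/-- The mutation `μ_k(B̃)` of the extended exchange matrix in direction `k`. -/
def mutB {m n : ℕ} (hnm : n ≤ m) (B : Matrix (Fin m) (Fin n) ℤ) (k : Fin n) :
    Matrix (Fin m) (Fin n) ℤ :=
  fun i j =>
    if i = Fin.castLE hnm k ∨ j = k then -B i j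
    else B i j + intPosPart (B i k) * intPosPart (B (Fin.castLE hnm k) j)
      - intPosPart (-B i k) * intPosPart (-B (Fin.castLE hnm k) j)

/-- The mutation `μ_k(Λ)` of the quantum commutation matrix in direction `k`:
`λ'_{ij} = λ_{ij}` for `i, j ≠ k`, `λ'_{ik} = -λ_{ik} + Σ_l [b_{lk}]_+ · λ_{il}` for
`i ≠ k`, extended skew-symmetrically. -/
def mutLam {m n : ℕ} (hnm : n ≤ m) (B : Matrix (Fin m) (Fin n) ℤ)
    (L : Matrix (Fin m) (Fin m) ℤ) (k : Fin n) : Matrix (Fin m) (Fin m) ℤ :=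
  fun i j =>
    if i = Fin.castLE hnm k then
      if j = Fin.castLE hnm k then 0
      else -(-L j (Fin.castLE hnm k) + ∑ l, intPosPart (B l k) * L j l)
    else if j = Fin.castLE hnm k then
      -L i (Fin.castLE hnm k) + ∑ l, intPosPart (B l k) * L i l
    else L i j

/-- Key identity for positive parts: `[a]_+[b]_+ - [-a]_+[-b]_+ = [a]_+ b + a [-b]_+`. -/
lemma intPosPart_key (a b : ℤ) :
    intPosPart a * intPosPart b - intPosPart (-a) * intPosPart (-b)
      = intPosPart a * b + a * intPosPart (-b) := by
  unfold intPosPart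
  simp only [max_def]
  split_ifs <;> nlinarith

lemma intPosPart_zero : intPosPart 0 = 0 := by simp [intPosPart]

lemma mul_intPosPart (c a : ℤ) (hc : 0 < c) :
    c * intPosPart a = intPosPart (c * a) := by
  unfold intPosPart
  rw [mul_max_of_nonneg _ _ hc.le, mul_zero]

/-- linearity helper -/
lemma sum_expand {m : ℕ} (u v w x : Fin m → ℤ) (c1 c2 : ℤ) :
    (∑ p, (u p + v p * c1 + w p * c2) * x p)
      = (∑ p, u p * x p) + c1 * (∑ p, v p * x p) + c2 * (∑ p, w p * x p) := by
  rw [Finset.mul_sum, Finset.mul_sum, ← Finset.sum_add_distrib, ← Finset.sum_add_distrib]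
  exact Finset.sum_congr rfl fun p _ => by ring

/-- **Mutation preserves compatibility.**  If `(B̃, Λ)` is a compatible pair and
`1 ≤ k ≤ n`, then `μ_k(B̃)ᵀ · μ_k(Λ) = B̃ᵀ · Λ`; in particular the mutated pair
`(μ_k(B̃), μ_k(Λ))` is again compatible with the same diagonal matrix `D`. -/
theorem mutation_compatible {m n : ℕ} (hn : 1 ≤ n) (hnm : n ≤ m)
    (B : Matrix (Fin m) (Fin n) ℤ) (L : Matrix (Fin m) (Fin m) ℤ)
    (d : Fin n → ℤ) (hcompat : IsCompatiblePair hnm B L d) (k : Fin n) :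
    (mutB hnm B k)ᵀ * mutLam hnm B L k = Bᵀ * L ∧
      IsCompatiblePair hnm (mutB hnm B k) (mutLam hnm B L k) d := by
  obtain ⟨hskew, hd, hBL⟩ := hcompat
  have lskew : ∀ p q : Fin m, L q p = -L p q := fun p q => by
    have := congrFun (congrFun hskew p) q
    simpa [Matrix.transpose_apply] using this
  have lzero : ∀ p : Fin m, L p p = 0 := fun p => by
    have := lskew p p; linarith
  -- restated compatibility
  have hsum : ∀ (i : Fin n) (j : Fin m),
      (∑ p, B p i * L p j) = if j = Fin.castLE hnm i then d i else 0 := by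
    intro i j
    have h := hBL i j
    rw [Matrix.mul_apply] at h
    simp only [Matrix.transpose_apply] at h
    rw [h]
    by_cases hj : j = Fin.castLE hnm i
    · subst hj; simp
    · rw [if_neg (fun hv => hj (Fin.ext (by simpa using hv))), if_neg hj]
  -- skew-symmetry of the principal part scaled by d
  have hCs : ∀ i j : Fin n,
      d i * B (Fin.castLE hnm i) j = -(d j * B (Fin.castLE hnm j) i) := by
    intro i j
    have h1 : (∑ p, (∑ l, B l i * L l p) * B p j) = d i * B (Fin.castLE hnm i) j := by
      have h : ∀ p : Fin m, (∑ l, B l i * L l p) * B p j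
          = if p = Fin.castLE hnm i then d i * B p j else 0 := by
        intro p; rw [hsum i p]; split_ifs <;> ring
      rw [Finset.sum_congr rfl fun p _ => h p, Finset.sum_ite_eq']
      simp
    have h2 : (∑ p, (∑ l, B l i * L l p) * B p j)
        = -(d j * B (Fin.castLE hnm j) i) := by
      calc (∑ p, (∑ l, B l i * L l p) * B p j)
          = ∑ p, ∑ l, B l i * L l p * B p j :=
            Finset.sum_congr rfl fun p _ => Finset.sum_mul _ _ _
        _ = ∑ l, ∑ p, B l i * L l p * B p j := Finset.sum_comm
        _ = ∑ l, -((∑ p, B p j * L p l) * B l i) := by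
            refine Finset.sum_congr rfl fun l _ => ?_
            rw [Finset.sum_mul, ← Finset.sum_neg_distrib]
            refine Finset.sum_congr rfl fun p _ => ?_
            rw [lskew p l]; ring
        _ = -(d j * B (Fin.castLE hnm j) i) := by
            rw [Finset.sum_neg_distrib]
            congr 1
            have h : ∀ l : Fin m, (∑ p, B p j * L p l) * B l i
                = if l = Fin.castLE hnm j then d j * B l i else 0 := by
              intro l; rw [hsum j l]; split_ifs <;> ring
            rw [Finset.sum_congr rfl fun l _ => h l, Finset.sum_ite_eq']
            simp
    linarith
  have hBkk : B (Fin.castLE hnm k) k = 0 := by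
    have h := hCs k k
    have h0 : d k * B (Fin.castLE hnm k) k = 0 := by linarith
    rcases mul_eq_zero.mp h0 with h' | h'
    · exact absurd h' (by have := hd k; omega)
    · exact h'
  have hek : intPosPart (B (Fin.castLE hnm k) k) = 0 := by
    rw [hBkk]; exact intPosPart_zero
  -- key sum identities
  have hI2 : ∀ i : Fin n,
      (∑ p, B p i * (∑ l, intPosPart (B l k) * L p l))
        = intPosPart (B (Fin.castLE hnm i) k) * d i := by
    intro i
    calc (∑ p, B p i * (∑ l, intPosPart (B l k) * L p l))
        = ∑ p, ∑ l, intPosPart (B l k) * (B p i * L p l) := by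
          refine Finset.sum_congr rfl fun p _ => ?_
          rw [Finset.mul_sum]
          exact Finset.sum_congr rfl fun l _ => by ring
      _ = ∑ l, ∑ p, intPosPart (B l k) * (B p i * L p l) := Finset.sum_comm
      _ = ∑ l, intPosPart (B l k) * (∑ p, B p i * L p l) := by
          exact Finset.sum_congr rfl fun l _ => (Finset.mul_sum _ _ _).symm
      _ = ∑ l, intPosPart (B l k) * (if l = Fin.castLE hnm i then d i else 0) :=
          Finset.sum_congr rfl fun l _ => by rw [hsum]
      _ = intPosPart (B (Fin.castLE hnm i) k) * d i := by
          simp only [mul_ite, mul_zero]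
          rw [Finset.sum_ite_eq']
          simp
  have hI3 : (∑ p, intPosPart (B p k) * (∑ l, intPosPart (B l k) * L p l)) = 0 := by
    have hre : (∑ p, intPosPart (B p k) * (∑ l, intPosPart (B l k) * L p l))
        = ∑ p, ∑ l, intPosPart (B p k) * (intPosPart (B l k) * L p l) :=
      Finset.sum_congr rfl fun p _ => Finset.mul_sum _ _ _
    have h : (∑ p, ∑ l, intPosPart (B p k) * (intPosPart (B l k) * L p l))
        = -(∑ p, ∑ l, intPosPart (B p k) * (intPosPart (B l k) * L p l)) := by
      conv_lhs => rw [Finset.sum_comm]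
      rw [← Finset.sum_neg_distrib]
      refine Finset.sum_congr rfl fun p _ => ?_
      rw [← Finset.sum_neg_distrib]
      refine Finset.sum_congr rfl fun l _ => ?_
      rw [lskew p l]; ring
    rw [hre]; linarith
  have hI4 : ∀ j : Fin m,
      (∑ p, intPosPart (B p k) * L p j)
        = -(∑ l, intPosPart (B l k) * L j l) := by
    intro j
    rw [← Finset.sum_neg_distrib]
    exact Finset.sum_congr rfl fun p _ => by rw [lskew p j]; ring
  -- entry lemmas for the mutated matrices
  have hB1 : ∀ p : Fin m, mutB hnm B k p k = -B p k := by
    intro p; simp [mutB]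
  have hB3 : ∀ i : Fin n, mutB hnm B k (Fin.castLE hnm k) i = -B (Fin.castLE hnm k) i := by
    intro i; simp [mutB]
  have hB2 : ∀ (p : Fin m) (i : Fin n), p ≠ Fin.castLE hnm k → i ≠ k →
      mutB hnm B k p i = B p i + intPosPart (B p k) * B (Fin.castLE hnm k) i
        + B p k * intPosPart (-B (Fin.castLE hnm k) i) := by
    intro p i hp hi
    have key := intPosPart_key (B p k) (B (Fin.castLE hnm k) i)
    simp only [mutB, if_neg (not_or.mpr ⟨hp, hi⟩)]
    linarith
  have hL1 : mutLam hnm B L k (Fin.castLE hnm k) (Fin.castLE hnm k) = 0 := by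
    simp [mutLam]
  have hL2 : ∀ p : Fin m, p ≠ Fin.castLE hnm k →
      mutLam hnm B L k p (Fin.castLE hnm k)
        = -L p (Fin.castLE hnm k) + ∑ l, intPosPart (B l k) * L p l := by
    intro p hp; simp [mutLam, hp]
  have hL3 : ∀ j : Fin m, j ≠ Fin.castLE hnm k →
      mutLam hnm B L k (Fin.castLE hnm k) j
        = -(-L j (Fin.castLE hnm k) + ∑ l, intPosPart (B l k) * L j l) := by
    intro j hj; simp [mutLam, hj]
  have hL4 : ∀ p j : Fin m, p ≠ Fin.castLE hnm k → j ≠ Fin.castLE hnm k →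
      mutLam hnm B L k p j = L p j := by
    intro p j hp hj; simp [mutLam, hp, hj]
  -- the main entrywise computation
  have hmain : ∀ (i : Fin n) (j : Fin m),
      (∑ p, mutB hnm B k p i * mutLam hnm B L k p j) = ∑ p, B p i * L p j := by
    intro i j
    by_cases hi : i = k
    · rw [hi]
      by_cases hj : j = Fin.castLE hnm k
      · subst hj
        have hpt : ∀ p : Fin m,
            mutB hnm B k p k * mutLam hnm B L k p (Fin.castLE hnm k)
              = B p k * L p (Fin.castLE hnm k)
                - B p k * (∑ l, intPosPart (B l k) * L p l) := by
          intro p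
          by_cases hp : p = Fin.castLE hnm k
          · subst hp
            rw [hB1, hL1, hBkk]; ring
          · rw [hB1, hL2 p hp]; ring
        calc (∑ p, mutB hnm B k p k * mutLam hnm B L k p (Fin.castLE hnm k))
            = ∑ p, (B p k * L p (Fin.castLE hnm k)
                - B p k * (∑ l, intPosPart (B l k) * L p l)) :=
              Finset.sum_congr rfl fun p _ => hpt p
          _ = (∑ p, B p k * L p (Fin.castLE hnm k))
                - ∑ p, B p k * (∑ l, intPosPart (B l k) * L p l) :=
              Finset.sum_sub_distrib _ _
          _ = ∑ p, B p k * L p (Fin.castLE hnm k) := by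
              rw [hI2 k, hek, zero_mul, sub_zero]
      · have hpt : ∀ p : Fin m,
            mutB hnm B k p k * mutLam hnm B L k p j = -(B p k * L p j) := by
          intro p
          by_cases hp : p = Fin.castLE hnm k
          · subst hp
            rw [hB1, hBkk]; ring
          · rw [hB1, hL4 p j hp hj]; ring
        rw [Finset.sum_congr rfl fun p _ => hpt p, Finset.sum_neg_distrib,
          hsum k j, if_neg hj]
        simp
    · -- i ≠ k
      have hKi : Fin.castLE hnm k ≠ Fin.castLE hnm i := by
        intro h
        exact hi (Fin.ext (by simpa using congrArg Fin.val h)).symm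
      by_cases hj : j = Fin.castLE hnm k
      · subst hj
        have hpt : ∀ p : Fin m,
            mutB hnm B k p i * mutLam hnm B L k p (Fin.castLE hnm k)
              = (B p i + intPosPart (B p k) * B (Fin.castLE hnm k) i
                  + B p k * intPosPart (-B (Fin.castLE hnm k) i))
                * (-L p (Fin.castLE hnm k) + ∑ l, intPosPart (B l k) * L p l)
                - (if p = Fin.castLE hnm k then
                    B (Fin.castLE hnm k) i
                      * (∑ l, intPosPart (B l k) * L (Fin.castLE hnm k) l)
                  else 0) := by
          intro p
          by_cases hp : p = Fin.castLE hnm k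
          · subst hp
            rw [hL1, if_pos rfl, hek, hBkk, lzero]; ring
          · rw [hB2 p i hp hi, hL2 p hp, if_neg hp]; ring
        rw [Finset.sum_congr rfl fun p _ => hpt p, Finset.sum_sub_distrib,
          Finset.sum_ite_eq', if_pos (Finset.mem_univ _)]
        have hsplit : ∀ v : Fin m → ℤ,
            (∑ p, v p * (-L p (Fin.castLE hnm k) + ∑ l, intPosPart (B l k) * L p l))
              = -(∑ p, v p * L p (Fin.castLE hnm k))
                + ∑ p, v p * (∑ l, intPosPart (B l k) * L p l) := by
          intro v
          rw [← Finset.sum_neg_distrib, ← Finset.sum_add_distrib]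
          exact Finset.sum_congr rfl fun p _ => by ring
        rw [sum_expand (fun p => B p i) (fun p => intPosPart (B p k)) (fun p => B p k)
          (fun p => -L p (Fin.castLE hnm k) + ∑ l, intPosPart (B l k) * L p l)
          (B (Fin.castLE hnm k) i) (intPosPart (-B (Fin.castLE hnm k) i))]
        rw [hsplit, hsplit, hsplit]
        rw [hI2 i, hI2 k, hI3, hI4 (Fin.castLE hnm k),
          hsum i (Fin.castLE hnm k), if_neg hKi,
          hsum k (Fin.castLE hnm k), if_pos rfl, hek]
        -- remaining: algebraic identity using hCs
        have hCik := hCs i k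
        have hmul : d i * intPosPart (B (Fin.castLE hnm i) k)
            = d k * intPosPart (-B (Fin.castLE hnm k) i) := by
          rw [mul_intPosPart _ _ (hd i), mul_intPosPart _ _ (hd k)]
          congr 1
          linarith
        have hdi := hd i
        have hdk := hd k
        nlinarith [hmul]
      · -- i ≠ k, j ≠ castLE k
        have hpt : ∀ p : Fin m,
            mutB hnm B k p i * mutLam hnm B L k p j
              = (B p i + intPosPart (B p k) * B (Fin.castLE hnm k) i
                  + B p k * intPosPart (-B (Fin.castLE hnm k) i)) * L p j
                + (if p = Fin.castLE hnm k then
                    B (Fin.castLE hnm k) i * (∑ l, intPosPart (B l k) * L j l)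
                  else 0) := by
          intro p
          by_cases hp : p = Fin.castLE hnm k
          · subst hp
            rw [hB3, hL3 j hj, if_pos rfl, hek, hBkk, lskew (Fin.castLE hnm k) j]
            ring
          · rw [hB2 p i hp hi, hL4 p j hp hj, if_neg hp]; ring
        rw [Finset.sum_congr rfl fun p _ => hpt p, Finset.sum_add_distrib,
          Finset.sum_ite_eq', if_pos (Finset.mem_univ _)]
        rw [sum_expand (fun p => B p i) (fun p => intPosPart (B p k)) (fun p => B p k)
          (fun p => L p j) (B (Fin.castLE hnm k) i) (intPosPart (-B (Fin.castLE hnm k) i))]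
        rw [hI4 j, hsum k j, if_neg hj]
        ring
  -- conclude
  have hprod : (mutB hnm B k)ᵀ * mutLam hnm B L k = Bᵀ * L := by
    ext i j
    rw [Matrix.mul_apply, Matrix.mul_apply]
    simp only [Matrix.transpose_apply]
    exact hmain i j
  refine ⟨hprod, ?_, hd, ?_⟩
  · -- skew-symmetry of mutLam
    ext p q
    simp only [Matrix.transpose_apply, Matrix.neg_apply]
    by_cases hp : p = Fin.castLE hnm k <;> by_cases hq : q = Fin.castLE hnm k <;>
      simp [mutLam, hp, hq, lskew p q]
  · intro i j
    rw [hprod]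
    exact hBL i j
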